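/- Let r = 2, s = 1 and α = √2 − 1. Then for every n ∈ ℕ, f_{2,1}^n(0, 0, 0) = (x(n), y(n), z(n)), where x(n) = −2·⌊(n + 1/2)α⌋, y(n) = n + x(n)/2, and z(n) = (x(n)² − 2·y(n)·(y(n) − 1))/4. -/

import Mathlib

/-- The one-dimensional rotor-router equilibration map on recurrent-state triples,
`f_{r,s}(x,y,z) = (x, y+s, z-y)` if `x+y ≤ z`, and `(x-r, y, z-x+1)` otherwise. -/
def rotorF (r s : ℤ) : ℤ × ℤ × ℤ → ℤ × ℤ × ℤ
  | (x, y, z) => if x + y ≤ z then (x, y + s, z - y) else (x - r, y, z - x + 1)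

noncomputable def A (n : ℕ) : ℤ := ⌊((n : ℝ) + 1 / 2) * (Real.sqrt 2 - 1)⌋

lemma sqrt2_sq : Real.sqrt 2 ^ 2 = 2 := Real.sq_sqrt (by norm_num)

lemma sqrt2_gt : (1 : ℝ) < Real.sqrt 2 := by
  nlinarith [sqrt2_sq, Real.sqrt_nonneg 2]

lemma irr (n : ℕ) : Irrational (((n : ℝ) + 1 / 2) * (Real.sqrt 2 - 1)) := by
  have h := irrational_sqrt_two
  have h2 : Irrational (((n : ℝ) + 1 / 2) * Real.sqrt 2) := by
    have := h.ratCast_mul (q := (n : ℚ) + 1/2) (by positivity)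
    convert this using 2 <;> push_cast <;> ring
  have h3 := h2.sub_ratCast ((n : ℚ) + 1/2)
  convert h3 using 1
  push_cast; ring

lemma A_lt (n : ℕ) : (A n : ℝ) < ((n : ℝ) + 1 / 2) * (Real.sqrt 2 - 1) :=
  lt_of_le_of_ne (Int.floor_le _) (fun h => (irr n).ne_int _ h.symm)

lemma A_hi (n : ℕ) : ((n : ℝ) + 1 / 2) * (Real.sqrt 2 - 1) < A n + 1 :=
  Int.lt_floor_add_one _

lemma A_nonneg (n : ℕ) : 0 ≤ A n := by
  apply Int.le_floor.2
  push_cast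
  nlinarith [sqrt2_gt, Nat.cast_nonneg (α := ℝ) n]

lemma key_lo (n : ℕ) : Real.sqrt 2 * (A n : ℝ) < (n : ℝ) - A n + 1 / 2 := by
  have h := A_lt n
  nlinarith [sqrt2_sq, sqrt2_gt]

lemma key_hi (n : ℕ) : (n : ℝ) - A n + 1 / 2 < Real.sqrt 2 * ((A n : ℝ) + 1) + 1 := by
  have h := A_hi n
  nlinarith [sqrt2_sq, sqrt2_gt]

lemma m_nonneg (n : ℕ) : 0 ≤ (n : ℤ) - A n := by
  by_contra hc
  push_neg at hc
  have h1 : (n : ℤ) - A n ≤ -1 := by omega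
  have hr : (n : ℝ) - A n ≤ -1 := by exact_mod_cast h1
  have ha : (0 : ℝ) ≤ (A n : ℝ) := by exact_mod_cast A_nonneg n
  have h := key_lo n
  nlinarith [sqrt2_gt]

lemma step1 (n : ℕ) (h : ((n : ℤ) - A n) * ((n : ℤ) - A n + 1) ≤ 2 * (A n + 1) ^ 2 - 2) :
    A (n + 1) = A n := by
  have hm := m_nonneg n
  have ha := A_nonneg n
  have hlo := A_lt n
  set a := A n with ha_def
  have hm' : (0:ℝ) ≤ (n : ℝ) - a := by exact_mod_cast hm
  have ha' : (0:ℝ) ≤ (a:ℝ) := by exact_mod_cast ha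
  have h' : ((n : ℝ) - a) * ((n : ℝ) - a + 1) ≤ 2 * ((a : ℝ) + 1) ^ 2 - 2 := by
    exact_mod_cast h
  have hsq : ((n : ℝ) - a + 1/2) ^ 2 < (Real.sqrt 2 * ((a:ℝ) + 1)) ^ 2 := by
    nlinarith [sqrt2_sq]
  have hmr : ((n : ℝ) - a + 1/2) < Real.sqrt 2 * ((a : ℝ) + 1) :=
    lt_of_pow_lt_pow_left₀ 2 (by positivity) hsq
  apply Int.floor_eq_iff.2
  constructor
  · push_cast
    nlinarith [sqrt2_gt]
  · push_cast
    nlinarith [sqrt2_sq, sqrt2_gt]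

lemma step2 (n : ℕ) (h : ¬ ((n : ℤ) - A n) * ((n : ℤ) - A n + 1) ≤ 2 * (A n + 1) ^ 2 - 2) :
    A (n + 1) = A n + 1 := by
  push_neg at h
  have hm := m_nonneg n
  have hhi := key_hi n
  set a := A n with ha_def
  have heven : Even (((n : ℤ) - a) * ((n : ℤ) - a + 1)) := Int.even_mul_succ_self _
  have h2 : 2 * (a + 1) ^ 2 ≤ ((n : ℤ) - a) * ((n : ℤ) - a + 1) := by
    rcases heven with ⟨k, hk⟩
    omega
  have hmr : Real.sqrt 2 * ((a : ℝ) + 1) < (n : ℝ) - a + 1/2 := by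
    have h' : 2 * ((a : ℝ) + 1) ^ 2 ≤ ((n : ℝ) - a) * ((n : ℝ) - a + 1) := by exact_mod_cast h2
    have hm' : (0:ℝ) ≤ (n : ℝ) - a := by exact_mod_cast hm
    have ha' : (0:ℝ) ≤ (a:ℝ) := by exact_mod_cast A_nonneg n
    nlinarith [sqrt2_sq, sqrt2_gt]
  apply Int.floor_eq_iff.2
  constructor
  · push_cast
    nlinarith [sqrt2_sq, sqrt2_gt]
  · push_cast
    nlinarith [sqrt2_sq, sqrt2_gt]

lemma A_zero : A 0 = 0 := by
  apply Int.floor_eq_iff.2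
  constructor <;> push_cast <;> nlinarith [sqrt2_sq, sqrt2_gt]

lemma key (n : ℕ) :
    ((rotorF 2 1)^[n] (0, 0, 0)).1 = -2 * A n ∧
    2 * ((rotorF 2 1)^[n] (0, 0, 0)).2.1 = 2 * (n : ℤ) + ((rotorF 2 1)^[n] (0, 0, 0)).1 ∧
    4 * ((rotorF 2 1)^[n] (0, 0, 0)).2.2 =
      ((rotorF 2 1)^[n] (0, 0, 0)).1 ^ 2 -
        2 * ((rotorF 2 1)^[n] (0, 0, 0)).2.1 * (((rotorF 2 1)^[n] (0, 0, 0)).2.1 - 1) := by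
  induction n with
  | zero => simp [A_zero]
  | succ n ih =>
    obtain ⟨h1, h2, h3⟩ := ih
    set x := ((rotorF 2 1)^[n] (0, 0, 0)).1 with hx
    set y := ((rotorF 2 1)^[n] (0, 0, 0)).2.1 with hy
    set z := ((rotorF 2 1)^[n] (0, 0, 0)).2.2 with hz
    have hstep : (rotorF 2 1)^[n + 1] (0, 0, 0) = rotorF 2 1 (x, y, z) := by
      rw [Function.iterate_succ_apply']
    have hyv : y = (n : ℤ) - A n := by omega
    have h3' : 4 * z = (-2 * A n) ^ 2 - 2 * ((n : ℤ) - A n) * (((n : ℤ) - A n) - 1) := by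
      rw [← h1, ← hyv]; exact h3
    by_cases hc : ((n : ℤ) - A n) * ((n : ℤ) - A n + 1) ≤ 2 * (A n + 1) ^ 2 - 2
    · have hA := step1 n hc
      have hcond : x + y ≤ z := by
        rw [h1, hyv]; nlinarith [h3', hc]
      have hr : rotorF 2 1 (x, y, z) = (x, y + 1, z - y) := by
        simp [rotorF, hcond]
      rw [hstep, hr]
      refine ⟨?_, ?_, ?_⟩
      · show x = -2 * A (n + 1)
        rw [hA, h1]
      · show 2 * (y + 1) = 2 * ((n : ℕ) + 1 : ℤ) + x
        push_cast
        omega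
      · show 4 * (z - y) = x ^ 2 - 2 * (y + 1) * (y + 1 - 1)
        linear_combination h3
    · have hA := step2 n hc
      push_neg at hc
      have hcond : ¬ x + y ≤ z := by
        rw [h1, hyv]
        intro hle
        nlinarith [h3', hc]
      have hr : rotorF 2 1 (x, y, z) = (x - 2, y, z - x + 1) := by
        simp [rotorF, hcond]
      rw [hstep, hr]
      refine ⟨?_, ?_, ?_⟩
      · show x - 2 = -2 * A (n + 1)
        rw [hA, h1]; ring
      · show 2 * y = 2 * ((n : ℕ) + 1 : ℤ) + (x - 2)
        push_cast
        omega
      · show 4 * (z - x + 1) = (x - 2) ^ 2 - 2 * y * (y - 1)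
        linear_combination h3



/-- Closed form for the orbit of `(0,0,0)` under `f_{2,1}`: with `α = √2 − 1`,
`f_{2,1}^n(0,0,0) = (x(n), y(n), z(n))` where `x(n) = −2⌊(n + 1/2)α⌋`,
`y(n) = n + x(n)/2` (i.e. `2 y(n) = 2n + x(n)`), and
`z(n) = (x(n)² − 2 y(n)(y(n) − 1))/4` (i.e. `4 z(n) = x(n)² − 2 y(n)(y(n) − 1)`). -/
theorem rotor_orbit_closed_form (n : ℕ) :
    ((rotorF 2 1)^[n] (0, 0, 0)).1 = -2 * ⌊((n : ℝ) + 1 / 2) * (Real.sqrt 2 - 1)⌋ ∧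
    2 * ((rotorF 2 1)^[n] (0, 0, 0)).2.1 = 2 * (n : ℤ) + ((rotorF 2 1)^[n] (0, 0, 0)).1 ∧
    4 * ((rotorF 2 1)^[n] (0, 0, 0)).2.2 =
      ((rotorF 2 1)^[n] (0, 0, 0)).1 ^ 2 -
        2 * ((rotorF 2 1)^[n] (0, 0, 0)).2.1 * (((rotorF 2 1)^[n] (0, 0, 0)).2.1 - 1) := key n
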